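/- Let p be an odd prime with p ≡ 1 (mod 4), and let s be the Legendre sequence of length p with s_0 = 1 (i.e., s_k = Legendre symbol (k/p) for k ≠ 0 and s_0 = 1). Then every off-peak periodic autocorrelation of s lies in {1, -3}. -/

import Mathlib

theorem legendre_seq_one_mod_four_autocorrelation
    (p : ℕ) [Fact p.Prime] (hp : p % 4 = 1)
    (s : ZMod p → ℤ) (hs0 : s 0 = 1)
    (hs : ∀ k : ZMod p, k ≠ 0 → s k = quadraticChar (ZMod p) k)
    (t : ZMod p) (ht : t ≠ 0) :
    ∑ k : ZMod p, s k * s (k + t) ∈ ({1, -3} : Set ℤ) := by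
  have hp2 : p ≠ 2 := by omega
  have hchar : ringChar (ZMod p) ≠ 2 := by
    rw [ZMod.ringChar_zmod_n]; exact hp2
  set χ := quadraticChar (ZMod p) with hχ
  have hneg1 : χ (-1) = 1 := by
    rw [hχ, quadraticChar_neg_one hchar, ZMod.card, ZMod.χ₄_nat_one_mod_four hp]
  have key : ∑ k : ZMod p, (χ k : ℤ) * χ (k + t) = -1 := by
    have h0 : ∑ k : ZMod p, (χ k : ℤ) * χ (k + t)
        = ∑ k ∈ Finset.univ.erase (0 : ZMod p), (χ k : ℤ) * χ (k + t) := by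
      rw [Finset.sum_erase_eq_sub (Finset.mem_univ _)]
      simp [hχ]
    rw [h0]
    have step : ∀ k ∈ Finset.univ.erase (0 : ZMod p),
        (χ k : ℤ) * χ (k + t) = χ (1 + t * k⁻¹) := by
      intro k hk
      have hk0 : k ≠ 0 := Finset.ne_of_mem_erase hk
      have he : (1 : ZMod p) + t * k⁻¹ = k⁻¹ * (k + t) := by
        field_simp
      have hinv : (χ k : ℤ) * χ k⁻¹ = 1 := by
        rw [← map_mul, mul_inv_cancel₀ hk0, map_one]
      have h2 : (χ k⁻¹ : ℤ) = χ k := by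
        rcases quadraticChar_dichotomy (F := ZMod p) hk0 with h | h <;>
          rw [hχ] at * <;> rw [h] at hinv ⊢ <;> linarith
      rw [he, map_mul, h2]
    rw [Finset.sum_congr rfl step]
    have hbij : ∑ k ∈ Finset.univ.erase (0 : ZMod p), (χ (1 + t * k⁻¹) : ℤ)
        = ∑ u ∈ Finset.univ.erase (1 : ZMod p), (χ u : ℤ) := by
      apply Finset.sum_nbij' (fun k => 1 + t * k⁻¹) (fun u => t * (u - 1)⁻¹)
      · intro k hk
        have hk0 : k ≠ 0 := Finset.ne_of_mem_erase hk
        simp only [Finset.mem_erase, Finset.mem_univ, and_true]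
        intro h
        have h' : t * k⁻¹ = 0 := by linear_combination h
        rcases mul_eq_zero.mp h' with h1 | h1
        · exact ht h1
        · exact hk0 (inv_eq_zero.mp h1)
      · intro u hu
        have hu1 : u ≠ 1 := Finset.ne_of_mem_erase hu
        simp only [Finset.mem_erase, Finset.mem_univ, and_true]
        intro h
        rcases mul_eq_zero.mp h with h1 | h1
        · exact ht h1
        · exact hu1 (by
            have h2 : u - 1 = 0 := inv_eq_zero.mp h1
            linear_combination h2)
      · intro k hk
        have hk0 : k ≠ 0 := Finset.ne_of_mem_erase hk
        have htk : t * k⁻¹ ≠ 0 := by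
          intro h
          rcases mul_eq_zero.mp h with h1 | h1
          · exact ht h1
          · exact hk0 (inv_eq_zero.mp h1)
        field_simp
        simp [ht]
      · intro u hu
        have hu1 : u ≠ 1 := Finset.ne_of_mem_erase hu
        have hu1' : u - 1 ≠ 0 := sub_ne_zero.mpr hu1
        field_simp
        ring
      · intro k hk; rfl
    rw [hbij, Finset.sum_erase_eq_sub (Finset.mem_univ _)]
    rw [hχ, quadraticChar_sum_zero hchar]
    simp
  have hnt0 : (-t : ZMod p) ≠ 0 := neg_ne_zero.mpr ht
  have h0t : (0 : ZMod p) ≠ -t := fun h => hnt0 h.symm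
  have hsplit : ∑ k : ZMod p, s k * s (k + t)
      = ∑ k : ZMod p, (χ k : ℤ) * χ (k + t) + 2 * χ t := by
    have hfn : ∀ k : ZMod p, s k * s (k + t)
        = (χ k : ℤ) * χ (k + t)
          + ((if k = 0 then (χ t : ℤ) else 0) + (if k = -t then (χ t : ℤ) else 0)) := by
      intro k
      by_cases h0 : k = 0
      · subst h0
        rw [zero_add, if_pos rfl, if_neg h0t, hs0, hs t ht, hχ, quadraticChar_zero]
        ring
      · by_cases h1 : k = -t
        · subst h1
          have he : (-t : ZMod p) + t = 0 := by ring
          have hmt : (χ (-t) : ℤ) = χ t := by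
            have hd : (-t : ZMod p) = -1 * t := by ring
            rw [hd, map_mul, hneg1, one_mul]
          rw [he, hs0, hs _ hnt0, if_neg hnt0, if_pos rfl, hmt, hχ, quadraticChar_zero]
          ring
        · have hkt : k + t ≠ 0 := by
            intro h
            apply h1
            linear_combination h
          rw [hs k h0, hs _ hkt, if_neg h0, if_neg h1]
          ring
    calc ∑ k : ZMod p, s k * s (k + t)
        = ∑ k : ZMod p, ((χ k : ℤ) * χ (k + t)
            + ((if k = 0 then (χ t : ℤ) else 0) + (if k = -t then (χ t : ℤ) else 0))) :=
          Finset.sum_congr rfl fun k _ => hfn k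
      _ = ∑ k : ZMod p, (χ k : ℤ) * χ (k + t) + 2 * χ t := by
          rw [Finset.sum_add_distrib, Finset.sum_add_distrib,
            Finset.sum_ite_eq' Finset.univ (0 : ZMod p),
            Finset.sum_ite_eq' Finset.univ (-t : ZMod p)]
          simp; ring
  rw [hsplit, key]
  rcases quadraticChar_dichotomy (F := ZMod p) ht with h | h
  · left; rw [hχ, h]; ring
  · right; rw [hχ, h]; simp only [Set.mem_singleton_iff]; ring
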